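/- If f ∈ L²[0,1] is supported in a set e_k belonging to the σ-algebra F_{k−1}, then for every 1 ≤ l ≤ p_k − 1 the function Δ_{k,l} f is also supported in e_k (i.e., Δ_{k,l} f = 0 almost everywhere outside e_k). -/

import Mathlib

open MeasureTheory Finset

noncomputable section

/-- Partial products: `vm p 0 = 1`, `vm p k = p 0 * p 1 * ... * p (k-1)`
(so `vm p k` is the paper's `m_k` with `p i` the paper's `p_{i+1}`). -/
def vm (p : ℕ → ℕ) : ℕ → ℕ
  | 0 => 1
  | k+1 => vm p k * p k

/-- The `i`-th mixed-radix digit of `n` (0-indexed: this is the paper's `α_{i+1}`). -/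
def vdigit (p : ℕ → ℕ) (n i : ℕ) : ℕ := n / vm p i % p i

/-- Digitwise addition mod `p i` of the mixed-radix digits (the paper's `k ∔ l`). -/
def vadd (p : ℕ → ℕ) (a b : ℕ) : ℕ :=
  ∑ i ∈ Finset.range (a + b + 1), (vdigit p a i + vdigit p b i) % p i * vm p i

/-- Digitwise negation: the inverse of `a` with respect to `vadd`. -/
def vneg (p : ℕ → ℕ) (a : ℕ) : ℕ :=
  ∑ i ∈ Finset.range (a + 1), (p i - vdigit p a i) % p i * vm p i

/-- Digitwise subtraction (the paper's `n ∸ a`). -/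
def vsub (p : ℕ → ℕ) (a b : ℕ) : ℕ := vadd p a (vneg p b)

/-- The generalized Rademacher function `rad p k = r_{k+1}`:
constant on `[j/m_{k+1}, (j+1)/m_{k+1})` with value `exp(2πi (j mod p_{k+1}) / p_{k+1})`. -/
def rad (p : ℕ → ℕ) (k : ℕ) (x : ℝ) : ℂ :=
  Complex.exp (2 * Real.pi * Complex.I *
    ((⌊x * (vm p (k+1) : ℝ)⌋ % (p k : ℤ) : ℤ) : ℂ) / (p k : ℂ))

/-- The Vilenkin function `w_n = ∏ r_{i+1}^{α_{i+1}}` where `α` are the digits of `n`. -/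
def vw (p : ℕ → ℕ) (n : ℕ) (x : ℝ) : ℂ :=
  ∏ i ∈ Finset.range (n + 1), rad p i x ^ vdigit p n i

/-- The Vilenkin–Fourier coefficient `(f, w_n)`. -/
def vip (p : ℕ → ℕ) (f : ℝ → ℂ) (n : ℕ) : ℂ :=
  ∫ x in Set.Ico (0:ℝ) 1, f x * (starRingEnd ℂ) (vw p n x)

/-- `E_k f = ∑_{n < m_k} (f, w_n) w_n`. -/
def vE (p : ℕ → ℕ) (k : ℕ) (f : ℝ → ℂ) (x : ℝ) : ℂ :=
  ∑ n ∈ Finset.range (vm p k), vip p f n * vw p n x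

/-- The martingale difference `Δ_k f = E_k f - E_{k-1} f` (for `k ≥ 1`). -/
def vD (p : ℕ → ℕ) (k : ℕ) (f : ℝ → ℂ) (x : ℝ) : ℂ :=
  vE p k f x - vE p (k-1) f x

/-- The block projection `Δ_{k,l} f = ∑_{n = l·m_{k-1}}^{(l+1)m_{k-1}-1} (f, w_n) w_n`. -/
def vDkl (p : ℕ → ℕ) (k l : ℕ) (f : ℝ → ℂ) (x : ℝ) : ℂ :=
  ∑ n ∈ Finset.Ico (l * vm p (k-1)) ((l+1) * vm p (k-1)), vip p f n * vw p n x

/-- The martingale square function `S f = (|Δ_0 f|² + ∑_{k≥1} |Δ_k f|²)^{1/2}`. -/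
def vS (p : ℕ → ℕ) (f : ℝ → ℂ) (x : ℝ) : ℝ :=
  Real.sqrt (‖vE p 0 f x‖^2 + ∑' k : ℕ, ‖vD p (k+1) f x‖^2)

/-- The Vilenkin square function
`S̃ f = (|Δ_0 f|² + ∑_{k≥1} ∑_{l=1}^{p_k-1} |Δ_{k,l} f|²)^{1/2}`. -/
def vtS (p : ℕ → ℕ) (f : ℝ → ℂ) (x : ℝ) : ℝ :=
  Real.sqrt (‖vE p 0 f x‖^2 + ∑' k : ℕ, ∑ l ∈ Finset.Ico 1 (p k), ‖vDkl p (k+1) l f x‖^2)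

variable {p : ℕ → ℕ}

lemma vm_pos (hp : ∀ i, 2 ≤ p i) (k : ℕ) : 0 < vm p k := by
  induction k with
  | zero => exact Nat.one_pos
  | succ k ih => exact Nat.mul_pos ih (lt_of_lt_of_le Nat.zero_lt_two (hp k))

lemma vm_dvd {i j : ℕ} (h : i ≤ j) : vm p i ∣ vm p j := by
  induction j with
  | zero => simp_all
  | succ j ih =>
    rcases Nat.lt_or_ge i (j+1) with h' | h'
    · exact (ih (Nat.lt_succ_iff.mp h')).trans ⟨p j, rfl⟩
    · have : i = j + 1 := le_antisymm h h'
      simp [this]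

lemma two_pow_le_vm (hp : ∀ i, 2 ≤ p i) (k : ℕ) : 2 ^ k ≤ vm p k := by
  induction k with
  | zero => simp [vm]
  | succ k ih =>
    calc 2 ^ (k+1) = 2 ^ k * 2 := by ring
    _ ≤ vm p k * p k := Nat.mul_le_mul ih (hp k)
    _ = vm p (k+1) := rfl

lemma lt_vm_of_le (hp : ∀ i, 2 ≤ p i) {n M : ℕ} (h : n < 2 ^ M) : n < vm p M := lt_of_lt_of_le h (two_pow_le_vm hp M)

lemma vdigit_eq_zero {n i : ℕ} (h : n < vm p i) : vdigit p n i = 0 := by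
  simp [vdigit, Nat.div_eq_of_lt h]

lemma prod_ext {n : ℕ} (x : ℝ) {A B : ℕ} (hAB : A ≤ B)
    (hz : ∀ i, A ≤ i → vdigit p n i = 0) :
    ∏ i ∈ Finset.range B, rad p i x ^ vdigit p n i
      = ∏ i ∈ Finset.range A, rad p i x ^ vdigit p n i := by
  rw [← Finset.prod_range_mul_prod_Ico _ hAB]
  have : ∀ i ∈ Finset.Ico A B, rad p i x ^ vdigit p n i = 1 := by
    intro i hi
    simp [hz i (Finset.mem_Ico.mp hi).1]
  rw [Finset.prod_eq_one this, mul_one]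

lemma vw_eq_prod (hp : ∀ i, 2 ≤ p i) {n M : ℕ} (h : n < vm p M) (x : ℝ) :
    vw p n x = ∏ i ∈ Finset.range M, rad p i x ^ vdigit p n i := by
  have hz1 : ∀ i, n + 1 ≤ i → vdigit p n i = 0 := by
    intro i hi
    refine vdigit_eq_zero (lt_vm_of_le hp ?_)
    calc n < 2 ^ (n+1) := lt_of_lt_of_le (Nat.lt_two_pow_self (n := n)) (Nat.pow_le_pow_right (by norm_num) (Nat.le_succ n))
    _ ≤ 2 ^ i := Nat.pow_le_pow_right (by norm_num) hi
  have hz2 : ∀ i, M ≤ i → vdigit p n i = 0 := by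
    intro i hi
    exact vdigit_eq_zero (lt_of_lt_of_le h (Nat.le_of_dvd (vm_pos hp i) (vm_dvd hi)))
  have N := max (n+1) M
  rw [vw, ← prod_ext x (le_max_left (n+1) M) hz1, prod_ext x (le_max_right (n+1) M) hz2]

lemma vdigit_block_lt (hp : ∀ i, 2 ≤ p i) {a j K i : ℕ} (hj : j < vm p K) (hi : i < K) :
    vdigit p (a * vm p K + j) i = vdigit p j i := by
  obtain ⟨c, hc⟩ : vm p (i+1) ∣ vm p K := vm_dvd hi
  have hpi : 0 < vm p i := vm_pos hp i
  have : a * vm p K + j = (a * (p i * c)) * vm p i + j := by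
    rw [hc]; show a * (vm p i * p i * c) + j = _; ring
  rw [vdigit, this, Nat.mul_comm _ (vm p i), Nat.mul_add_div hpi, Nat.add_comm]
  have h2 : a * (p i * c) = a * c * p i := by ring
  rw [h2, Nat.add_mul_mod_self_right]
  rfl

lemma vdigit_block_self (hp : ∀ i, 2 ≤ p i) {a j K : ℕ} (hj : j < vm p K) (ha : a < p K) :
    vdigit p (a * vm p K + j) K = a := by
  rw [vdigit, Nat.mul_comm a (vm p K), Nat.mul_add_div (vm_pos hp K), Nat.div_eq_of_lt hj]
  simp [Nat.mod_eq_of_lt ha]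

lemma vw_block (hp : ∀ i, 2 ≤ p i) {a j K : ℕ} (hj : j < vm p K) (ha : a < p K) (x : ℝ) :
    vw p (a * vm p K + j) x = vw p j x * rad p K x ^ a := by
  have hlt : a * vm p K + j < vm p (K+1) := by
    show _ < vm p K * p K
    calc a * vm p K + j < a * vm p K + vm p K := by omega
    _ = (a+1) * vm p K := by ring
    _ ≤ p K * vm p K := Nat.mul_le_mul_right _ ha
    _ = vm p K * p K := Nat.mul_comm _ _
  rw [vw_eq_prod hp hlt, vw_eq_prod hp hj, Finset.prod_range_succ,
    vdigit_block_self hp hj ha]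
  congr 1
  apply Finset.prod_congr rfl
  intro i hi
  rw [vdigit_block_lt hp hj (Finset.mem_range.mp hi)]

lemma rad_eq (i : ℕ) (x : ℝ) : rad p i x =
    Complex.exp (2 * Real.pi * Complex.I *
      ((⌊x * (vm p (i+1) : ℝ)⌋ % (p i : ℤ) : ℤ) : ℂ) / (p i : ℂ)) := rfl

lemma norm_rad (i : ℕ) (x : ℝ) : ‖rad p i x‖ = 1 := by
  rw [rad_eq]
  rw [Complex.norm_exp]
  convert Real.exp_zero using 2
  have : (2 * Real.pi * Complex.I * ((⌊x * (vm p (i+1) : ℝ)⌋ % (p i : ℤ) : ℤ) : ℂ) / (p i : ℂ))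
      = ((2 * Real.pi * (⌊x * (vm p (i+1) : ℝ)⌋ % (p i : ℤ) : ℤ) / (p i : ℝ) : ℝ) : ℂ) * Complex.I := by
    push_cast
    ring
  rw [this]
  simp [Complex.mul_I_re]

lemma conj_rad (i : ℕ) (y : ℝ) : (starRingEnd ℂ) (rad p i y) =
    Complex.exp (-(2 * Real.pi * Complex.I *
      ((⌊y * (vm p (i+1) : ℝ)⌋ % (p i : ℤ) : ℤ) : ℂ) / (p i : ℂ))) := by
  rw [rad_eq, ← Complex.exp_conj]
  congr 1
  rw [map_div₀]
  simp only [map_mul, Complex.conj_I, Complex.conj_ofNat, map_intCast,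
    Complex.conj_natCast, Complex.conj_ofReal]
  ring

lemma geom_zero (hp : ∀ i, 2 ≤ p i) (i : ℕ) {x y : ℝ}
    (h : ⌊x * (vm p (i+1) : ℝ)⌋ % (p i : ℤ) ≠ ⌊y * (vm p (i+1) : ℝ)⌋ % (p i : ℤ)) :
    ∑ a ∈ Finset.range (p i), (rad p i x * (starRingEnd ℂ) (rad p i y)) ^ a = 0 := by
  set dx : ℤ := ⌊x * (vm p (i+1) : ℝ)⌋ % (p i : ℤ) with hdx
  set dy : ℤ := ⌊y * (vm p (i+1) : ℝ)⌋ % (p i : ℤ) with hdy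
  have hpi : (0:ℤ) < (p i : ℤ) := by exact_mod_cast lt_of_lt_of_le Nat.zero_lt_two (hp i)
  have hxr : 0 ≤ dx ∧ dx < p i := ⟨Int.emod_nonneg _ (ne_of_gt hpi), Int.emod_lt_of_pos _ hpi⟩
  have hyr : 0 ≤ dy ∧ dy < p i := ⟨Int.emod_nonneg _ (ne_of_gt hpi), Int.emod_lt_of_pos _ hpi⟩
  have hc : rad p i x * (starRingEnd ℂ) (rad p i y)
      = Complex.exp (2 * Real.pi * Complex.I * ((dx - dy : ℤ) : ℂ) / (p i : ℂ)) := by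
    rw [rad_eq, conj_rad, ← Complex.exp_add]
    congr 1
    have hpne : (p i : ℂ) ≠ 0 := by exact_mod_cast (ne_of_gt (lt_of_lt_of_le Nat.zero_lt_two (hp i)))
    push_cast
    ring
  set c := rad p i x * (starRingEnd ℂ) (rad p i y) with hcdef
  have hc1 : c ≠ 1 := by
    rw [hc]
    intro hone
    rw [Complex.exp_eq_one_iff] at hone
    obtain ⟨n, hn⟩ := hone
    have hpne : (p i : ℂ) ≠ 0 := by exact_mod_cast (ne_of_gt (lt_of_lt_of_le Nat.zero_lt_two (hp i)))
    have h2 : ((dx - dy : ℤ) : ℂ) = (n : ℂ) * (p i : ℂ) := by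
      have h2pi : (2 * Real.pi * Complex.I : ℂ) ≠ 0 := by
        simp [Real.pi_ne_zero, Complex.I_ne_zero]
      field_simp at hn
      have h2pi' : (2 * (Real.pi:ℂ) * Complex.I : ℂ) ≠ 0 := by
        simp [Real.pi_ne_zero, Complex.I_ne_zero]
      push_cast
      apply mul_left_cancel₀ h2pi'
      push_cast at hn
      linear_combination (2 * (Real.pi:ℂ) * Complex.I) * hn
    have : (dx - dy : ℤ) = n * p i := by exact_mod_cast h2
    have habs : dx - dy ≠ 0 := sub_ne_zero.mpr h
    have h3 : |dx - dy| < p i := by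
      rw [abs_lt]; omega
    rcases Int.lt_or_lt_of_ne habs with hlt | hgt
    · have : n * p i < 0 := this ▸ hlt
      have hn1 : n < 0 := by
        by_contra hn0
        push_neg at hn0
        nlinarith
      nlinarith [abs_lt.mp h3]
    · have : 0 < n * p i := this ▸ hgt
      have hn1 : 0 < n := by
        by_contra hn0
        push_neg at hn0
        nlinarith
      nlinarith [abs_lt.mp h3]
  have hcp : c ^ (p i) = 1 := by
    rw [hc, ← Complex.exp_nat_mul]
    rw [Complex.exp_eq_one_iff]
    refine ⟨dx - dy, ?_⟩
    have hpne : (p i : ℂ) ≠ 0 := by exact_mod_cast (ne_of_gt (lt_of_lt_of_le Nat.zero_lt_two (hp i)))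
    field_simp
  rw [geom_sum_eq hc1, hcp]
  simp

lemma sum_range_mul_eq {M : Type*} [AddCommMonoid M] (f : ℕ → M) (m q : ℕ) :
    ∑ j ∈ Finset.range (m * q), f j
      = ∑ a ∈ Finset.range q, ∑ t ∈ Finset.range m, f (a * m + t) := by
  induction q with
  | zero => simp
  | succ q ih =>
    rw [Finset.sum_range_succ, ← ih, Nat.mul_succ,
      ← Finset.sum_range_add_sum_Ico f (Nat.le_add_right (m*q) m)]
    congr 1
    rw [Finset.sum_Ico_eq_sum_range]
    simp [Nat.mul_comm, Nat.add_comm]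

lemma kernel_prod (hp : ∀ i, 2 ≤ p i) (K : ℕ) (x y : ℝ) :
    ∑ j ∈ Finset.range (vm p K), vw p j x * (starRingEnd ℂ) (vw p j y)
      = ∏ i ∈ Finset.range K,
          ∑ a ∈ Finset.range (p i), (rad p i x * (starRingEnd ℂ) (rad p i y)) ^ a := by
  induction K with
  | zero => simp [vm, vw, vdigit]
  | succ K ih =>
    show ∑ j ∈ Finset.range (vm p K * p K), _ = _
    rw [sum_range_mul_eq _ (vm p K) (p K)]
    rw [Finset.prod_range_succ, ← ih]
    rw [Finset.mul_sum]
    apply Finset.sum_congr rfl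
    intro a ha
    rw [Finset.sum_mul]
    apply Finset.sum_congr rfl
    intro t ht
    rw [vw_block hp (Finset.mem_range.mp ht) (Finset.mem_range.mp ha),
      vw_block hp (Finset.mem_range.mp ht) (Finset.mem_range.mp ha), map_mul, map_pow, mul_pow]
    ring

lemma int_floor_div (a : ℝ) {n : ℤ} (hn : 0 < n) : ⌊a / (n:ℝ)⌋ = ⌊a⌋ / n := by
  have hn' : (0:ℝ) < (n:ℝ) := by exact_mod_cast hn
  set q := ⌊a⌋ / n with hq
  set r := ⌊a⌋ % n with hr
  have hqr : n * q + r = ⌊a⌋ := Int.mul_ediv_add_emod _ _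
  have hr0 : 0 ≤ r := Int.emod_nonneg _ (ne_of_gt hn)
  have hrn : r < n := Int.emod_lt_of_pos _ hn
  rw [Int.floor_eq_iff]
  constructor
  · rw [le_div_iff₀ hn']
    have h1 : ((q * n : ℤ) : ℝ) ≤ ((⌊a⌋ : ℤ) : ℝ) := by exact_mod_cast (by nlinarith : q * n ≤ ⌊a⌋)
    push_cast at h1 ⊢
    nlinarith [Int.floor_le a]
  · rw [div_lt_iff₀ hn']
    have h1 : ((⌊a⌋ + 1 : ℤ) : ℝ) ≤ (((q+1) * n : ℤ) : ℝ) := by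
      exact_mod_cast (by nlinarith : ⌊a⌋ + 1 ≤ (q+1) * n)
    push_cast at h1 ⊢
    nlinarith [Int.lt_floor_add_one a]
lemma floor_step (hp : ∀ i, 2 ≤ p i) (i : ℕ) (x : ℝ) :
    ⌊x * (vm p i : ℝ)⌋ = ⌊x * (vm p (i+1) : ℝ)⌋ / (p i : ℤ) := by
  have hpi : (0:ℝ) < (p i : ℝ) := by exact_mod_cast lt_of_lt_of_le Nat.zero_lt_two (hp i)
  have : x * (vm p i : ℝ) = x * (vm p (i+1) : ℝ) / ((p i : ℤ) : ℝ) := by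
    show _ = x * ((vm p i * p i : ℕ) : ℝ) / _
    push_cast
    field_simp
  rw [this, int_floor_div _ (by exact_mod_cast lt_of_lt_of_le Nat.zero_lt_two (hp i) : (0:ℤ) < (p i : ℤ))]

lemma floor_eq_of_digits_eq (hp : ∀ i, 2 ≤ p i) (K : ℕ) {x y : ℝ}
    (hx : x ∈ Set.Ico (0:ℝ) 1) (hy : y ∈ Set.Ico (0:ℝ) 1)
    (h : ∀ i < K, ⌊x * (vm p (i+1) : ℝ)⌋ % (p i : ℤ) = ⌊y * (vm p (i+1) : ℝ)⌋ % (p i : ℤ)) :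
    ⌊x * (vm p K : ℝ)⌋ = ⌊y * (vm p K : ℝ)⌋ := by
  induction K with
  | zero =>
    show ⌊x * ((1:ℕ):ℝ)⌋ = ⌊y * ((1:ℕ):ℝ)⌋
    rw [Nat.cast_one, mul_one, mul_one, Int.floor_eq_zero_iff.mpr, Int.floor_eq_zero_iff.mpr]
    · exact ⟨hy.1, hy.2⟩
    · exact ⟨hx.1, hx.2⟩
  | succ K ih =>
    have ihh := ih (fun i hi => h i (Nat.lt_succ_of_lt hi))
    have ex := Int.mul_ediv_add_emod ⌊x * (vm p (K+1) : ℝ)⌋ (p K : ℤ)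
    have ey := Int.mul_ediv_add_emod ⌊y * (vm p (K+1) : ℝ)⌋ (p K : ℤ)
    rw [← floor_step hp K x] at ex
    rw [← floor_step hp K y] at ey
    rw [← ex, ← ey, ihh, h K (Nat.lt_succ_self K)]

lemma block_kernel_zero (hp : ∀ i, 2 ≤ p i) (K l : ℕ) (hl : l < p K) {x y : ℝ}
    (hx : x ∈ Set.Ico (0:ℝ) 1) (hy : y ∈ Set.Ico (0:ℝ) 1)
    (hne : ⌊x * (vm p K : ℝ)⌋ ≠ ⌊y * (vm p K : ℝ)⌋) :
    ∑ n ∈ Finset.Ico (l * vm p K) ((l+1) * vm p K),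
      vw p n x * (starRingEnd ℂ) (vw p n y) = 0 := by
  obtain ⟨i, hiK, hdig⟩ : ∃ i < K,
      ⌊x * (vm p (i+1) : ℝ)⌋ % (p i : ℤ) ≠ ⌊y * (vm p (i+1) : ℝ)⌋ % (p i : ℤ) := by
    by_contra hcon
    push_neg at hcon
    exact hne (floor_eq_of_digits_eq hp K hx hy hcon)
  rw [Finset.sum_Ico_eq_sum_range]
  have hmm : (l+1) * vm p K - l * vm p K = vm p K := by
    rw [Nat.add_mul, Nat.one_mul, Nat.add_sub_cancel_left]
  rw [hmm]
  have : ∀ t ∈ Finset.range (vm p K),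
      vw p (l * vm p K + t) x * (starRingEnd ℂ) (vw p (l * vm p K + t) y)
        = (rad p K x * (starRingEnd ℂ) (rad p K y)) ^ l
            * (vw p t x * (starRingEnd ℂ) (vw p t y)) := by
    intro t ht
    rw [vw_block hp (Finset.mem_range.mp ht) hl, vw_block hp (Finset.mem_range.mp ht) hl,
      map_mul, map_pow, mul_pow]
    ring
  rw [Finset.sum_congr rfl this, ← Finset.mul_sum, kernel_prod hp]
  rw [Finset.prod_eq_zero (Finset.mem_range.mpr hiK) (geom_zero hp i hdig), mul_zero]

lemma norm_vw (n : ℕ) (x : ℝ) : ‖vw p n x‖ = 1 := by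
  rw [vw]
  rw [norm_prod]
  apply Finset.prod_eq_one
  intro i _
  rw [norm_pow, norm_rad, one_pow]

lemma measurable_rad (i : ℕ) : Measurable (rad p i) := by
  apply Measurable.cexp
  apply Measurable.div_const
  apply Measurable.const_mul
  apply Measurable.comp (g := fun z : ℤ => ((z % (p i : ℤ) : ℤ) : ℂ))
  · exact measurable_from_top
  · exact (measurable_id.mul_const _).floor

lemma measurable_vw (n : ℕ) : Measurable (vw p n) := by
  unfold vw
  apply Finset.measurable_prod
  intro i _
  exact (measurable_rad i).pow_const _

lemma mem_atom_iff (hp : ∀ i, 2 ≤ p i) (K j : ℕ) {y : ℝ} :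
    y ∈ Set.Ico ((j : ℝ) / vm p K) ((j + 1 : ℝ) / vm p K) ↔ ⌊y * (vm p K : ℝ)⌋ = (j : ℤ) := by
  have hm : (0:ℝ) < (vm p K : ℝ) := by exact_mod_cast vm_pos hp K
  rw [Set.mem_Ico, div_le_iff₀ hm, lt_div_iff₀ hm, Int.floor_eq_iff]
  constructor
  · rintro ⟨h1, h2⟩
    constructor
    · push_cast; linarith
    · push_cast; push_cast at h2; linarith
  · rintro ⟨h1, h2⟩
    constructor
    · push_cast at h1; linarith
    · push_cast at h2 ⊢; linarith


/-- if `f` is supported (a.e.) in a set `e ∈ F_{k-1}` (a union of atoms of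
`F_{k-1}`), then `Δ_{k,l} f` vanishes outside `e`, for every `1 ≤ l ≤ p_k - 1`. -/
theorem stmt_11 (p : ℕ → ℕ) (hp : ∀ i, 2 ≤ p i) (k l : ℕ) (hk : 1 ≤ k)
    (hl1 : 1 ≤ l) (hl2 : l ≤ p (k-1) - 1)
    (S : Finset ℕ) (hS : ∀ j ∈ S, j < vm p (k-1))
    (e : Set ℝ) (he : e = ⋃ j ∈ S, Set.Ico ((j : ℝ) / vm p (k-1)) ((j + 1 : ℝ) / vm p (k-1)))
    (f : ℝ → ℂ) (hf : MemLp f 2 (volume.restrict (Set.Ico (0:ℝ) 1)))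
    (hsupp : ∀ᵐ x, x ∈ Set.Ico (0:ℝ) 1 \ e → f x = 0) :
    ∀ x ∈ Set.Ico (0:ℝ) 1 \ e, vDkl p k l f x = 0 := by
  intro x hx
  set K := k - 1 with hK
  set m := vm p K with hm
  haveI : IsFiniteMeasure (volume.restrict (Set.Ico (0:ℝ) 1)) := by
    constructor
    rw [Measure.restrict_apply_univ, Real.volume_Ico]
    norm_num
  have hfint : Integrable f (volume.restrict (Set.Ico (0:ℝ) 1)) :=
    hf.integrable (by norm_num)
  have hint : ∀ n : ℕ, Integrable
      (fun y => f y * ((starRingEnd ℂ) (vw p n y) * vw p n x))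
      (volume.restrict (Set.Ico (0:ℝ) 1)) := by
    intro n
    have h1 : Integrable (fun y => ((starRingEnd ℂ) (vw p n y) * vw p n x) * f y)
        (volume.restrict (Set.Ico (0:ℝ) 1)) := by
      apply hfint.bdd_mul (c := 1)
      · exact ((Complex.continuous_conj.measurable.comp (measurable_vw n)).mul_const _).aestronglyMeasurable
      · refine Filter.Eventually.of_forall (fun y => ?_)
        have : ‖(starRingEnd ℂ) (vw p n y)‖ = 1 := by
          rw [RCLike.norm_conj, norm_vw]
        rw [norm_mul, this, norm_vw, one_mul]
    exact h1.congr (Filter.Eventually.of_forall (fun y => by ring))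
  have hterm : ∀ n : ℕ, vip p f n * vw p n x
      = ∫ y in Set.Ico (0:ℝ) 1, f y * ((starRingEnd ℂ) (vw p n y) * vw p n x) := by
    intro n
    rw [vip, ← integral_mul_const]
    simp_rw [mul_assoc]
  have step1 : vDkl p k l f x = ∫ y in Set.Ico (0:ℝ) 1,
      f y * ∑ n ∈ Finset.Ico (l * m) ((l+1) * m),
        (starRingEnd ℂ) (vw p n y) * vw p n x := by
    rw [vDkl]
    rw [Finset.sum_congr rfl (fun n _ => hterm n),
      ← integral_finset_sum _ (fun n _ => hint n)]
    congr 1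
    ext y
    rw [Finset.mul_sum]
  rw [step1]
  apply integral_eq_zero_of_ae
  have h1 : ∀ᵐ y ∂(volume.restrict (Set.Ico (0:ℝ) 1)), y ∈ Set.Ico (0:ℝ) 1 :=
    ae_restrict_mem measurableSet_Ico
  have h2 : ∀ᵐ y ∂(volume.restrict (Set.Ico (0:ℝ) 1)),
      (y ∈ Set.Ico (0:ℝ) 1 \ e → f y = 0) := ae_restrict_of_ae hsupp
  filter_upwards [h1, h2] with y hy1 hy2
  by_cases hye : y ∈ e
  · have hyIco : y ∈ Set.Ico (0:ℝ) 1 := hy1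
    obtain ⟨j, hjS, hj⟩ : ∃ j ∈ S, y ∈ Set.Ico ((j : ℝ) / m) ((j + 1 : ℝ) / m) := by
      rw [he] at hye
      simp only [Set.mem_iUnion, exists_prop] at hye
      exact hye
    have hyfloor : ⌊y * (m : ℝ)⌋ = (j : ℤ) := (mem_atom_iff hp K j).mp hj
    have hxfloor : ⌊x * (m : ℝ)⌋ ≠ ⌊y * (m : ℝ)⌋ := by
      intro hcon
      apply hx.2
      rw [he]
      refine Set.mem_biUnion hjS ?_
      exact (mem_atom_iff hp K j).mpr (hcon.trans hyfloor)
    have hl : l < p K := by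
      have := hp K
      omega
    have hker := block_kernel_zero hp K l hl hx.1 hyIco hxfloor
    have : ∑ n ∈ Finset.Ico (l * m) ((l+1) * m),
        (starRingEnd ℂ) (vw p n y) * vw p n x = 0 := by
      rw [← hker]
      apply Finset.sum_congr rfl
      intro n _
      ring
    rw [this, mul_zero]
    rfl
  · rw [hy2 ⟨hy1, hye⟩, zero_mul]
    rfl
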